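/- If a presence–absence matrix M : Fin m → Fin n → Bool contains exactly one checkerboard unit (there is exactly one choice of an unordered pair of rows {i, j} together with an unordered pair of columns {k, l} forming a checkerboard unit), then M admits exactly one alternative configuration: there is exactly one matrix N ≠ M with the same row sums and the same column sums as M, namely the matrix obtained from M by swapping that checkerboard unit. -/

import Mathlib

/-- The row sum of row `i`: the number of columns `c` with `M i c = true`. -/
def rowSum {m n : ℕ} (M : Fin m → Fin n → Bool) (i : Fin m) : ℕ :=
  (Finset.univ.filter fun c => M i c = true).card

/-- The column sum of column `c`: the number of rows `i` with `M i c = true`. -/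
def colSum {m n : ℕ} (M : Fin m → Fin n → Bool) (c : Fin n) : ℕ :=
  (Finset.univ.filter fun i => M i c = true).card

/-- The unordered pair of rows `{i, j}` together with the unordered pair of columns
`{k, l}` forms a checkerboard unit of `M`: the 2×2 submatrix has ones on exactly one
diagonal and zeros on the other. -/
def IsCheckerboardUnit {m n : ℕ} (M : Fin m → Fin n → Bool)
    (i j : Fin m) (k l : Fin n) : Prop :=
  (M i k = true ∧ M i l = false ∧ M j k = false ∧ M j l = true) ∨
  (M i k = false ∧ M i l = true ∧ M j k = true ∧ M j l = false)

/-- The matrix obtained from `M` by swapping the checkerboard unit on rows `i, j` and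
columns `k, l`: the four entries are replaced by the opposite diagonal pattern, all
other entries are unchanged. -/
def swapCheckerboard {m n : ℕ} (M : Fin m → Fin n → Bool)
    (i j : Fin m) (k l : Fin n) : Fin m → Fin n → Bool :=
  fun r c => if (r = i ∨ r = j) ∧ (c = k ∨ c = l) then !(M r c) else M r c

open Finset



lemma card_filter_flip2 {α : Type*} [Fintype α] [DecidableEq α] (f g : α → Bool)
    (a b : α) (hab : a ≠ b)
    (hga : g a ≠ f a) (hgb : g b ≠ f b) (hfab : f a ≠ f b)
    (hout : ∀ x, x ≠ a → x ≠ b → g x = f x) :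
    (univ.filter fun x => g x = true).card = (univ.filter fun x => f x = true).card := by
  classical
  rw [Finset.card_filter, Finset.card_filter]
  have hsub : ({a, b} : Finset α) ⊆ univ := subset_univ _
  rw [← Finset.sum_sdiff hsub, ← Finset.sum_sdiff hsub]
  congr 1
  · exact Finset.sum_congr rfl (fun x hx => by
      simp only [mem_sdiff, mem_insert, mem_singleton] at hx
      push_neg at hx
      rw [hout x hx.2.1 hx.2.2])
  · rw [Finset.sum_pair hab, Finset.sum_pair hab]
    revert hga hgb hfab
    cases f a <;> cases f b <;> cases g a <;> cases g b <;> simp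

lemma card_diff_balance {α : Type*} [Fintype α] [DecidableEq α] (f g : α → Bool)
    (h : (univ.filter fun x => f x = true).card = (univ.filter fun x => g x = true).card) :
    (univ.filter fun x => f x = true ∧ g x = false).card
      = (univ.filter fun x => g x = true ∧ f x = false).card := by
  classical
  have key : ∀ u v : α → Bool, (univ.filter fun x => u x = true).card
      = (univ.filter fun x => u x = true ∧ v x = true).card
        + (univ.filter fun x => u x = true ∧ v x = false).card := by
    intro u v
    have h2 := Finset.card_filter_add_card_filter_not
      (s := univ.filter fun x => u x = true) (p := fun x => v x = true)
    rw [Finset.filter_filter, Finset.filter_filter] at h2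
    rw [← h2]
    congr 2
    ext x
    simp [Bool.not_eq_true]
  have e1 := key f g
  have e2 := key g f
  have e3 : (univ.filter fun x => f x = true ∧ g x = true).card
      = (univ.filter fun x => g x = true ∧ f x = true).card := by
    congr 1
    ext x
    simp [and_comm]
  omega

lemma exists_diff {α : Type*} [Fintype α] [DecidableEq α] (f g : α → Bool)
    (h : (univ.filter fun x => f x = true).card = (univ.filter fun x => g x = true).card)
    (x : α) (hx : g x = true ∧ f x = false) : ∃ y, f y = true ∧ g y = false := by
  classical
  have hb := card_diff_balance f g h
  have hpos : 0 < (univ.filter fun y => g y = true ∧ f y = false).card :=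
    Finset.card_pos.mpr ⟨x, by simp [hx.1, hx.2]⟩
  rw [← hb] at hpos
  obtain ⟨y, hy⟩ := Finset.card_pos.mp hpos
  simp only [mem_filter, mem_univ, true_and] at hy
  exact ⟨y, hy⟩

lemma refine_cycle {m n : ℕ} (p q : Fin m → Fin n → Prop)
    (hdis : ∀ r c, p r c → q r c → False) :
    ∀ t, 2 ≤ t → ∀ R : ℕ → Fin m, ∀ C : ℕ → Fin n,
    (∀ s s', s < t → s' < t → R s = R s' → s = s') →
    (∀ s, s < t → p (R s) (C s)) →
    (∀ s, s + 1 < t → q (R (s+1)) (C s)) →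
    q (R 0) (C (t-1)) →
    ∃ t', 2 ≤ t' ∧ ∃ R' : ℕ → Fin m, ∃ C' : ℕ → Fin n,
      (∀ s s', s < t' → s' < t' → R' s = R' s' → s = s') ∧
      (∀ s s', s < t' → s' < t' → C' s = C' s' → s = s') ∧
      (∀ s, s < t' → p (R' s) (C' s)) ∧
      (∀ s, s + 1 < t' → q (R' (s+1)) (C' s)) ∧
      q (R' 0) (C' (t'-1)) := by
  intro t
  induction t using Nat.strong_induction_on with
  | _ t IH =>
    intro ht R C hR hp hq hcl
    by_cases hC : ∀ s s', s < t → s' < t → C s = C s' → s = s'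
    · exact ⟨t, ht, R, C, hR, hC, hp, hq, hcl⟩
    · push_neg at hC
      obtain ⟨s, s', hs, hs', hCe, hne⟩ := hC
      have hrep : ∃ u g, 1 ≤ g ∧ u + g < t ∧ C u = C (u + g) := by
        rcases Nat.lt_or_ge s s' with hlt | hge
        · exact ⟨s, s' - s, by omega, by omega, by rw [hCe]; congr 1; omega⟩
        · have : s' < s := by omega
          exact ⟨s', s - s', by omega, by omega, by rw [← hCe]; congr 1; omega⟩
      obtain ⟨u, g, hg1, hug, hCug⟩ := hrep
      have hg2 : 2 ≤ g := by
        by_contra hcon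
        have hge : g = 1 := by omega
        subst hge
        exact hdis (R (u+1)) (C u)
          (by have := hp (u+1) (by omega); rwa [← hCug] at this)
          (hq u (by omega))
      have hglt : g < t := by omega
      apply IH g hglt hg2 (fun v => R (u+1+v))
        (fun v => if v = g - 1 then C u else C (u+1+v))
      · intro v v' hv hv' hEq
        have := hR (u+1+v) (u+1+v') (by omega) (by omega) hEq
        omega
      · intro v hv
        by_cases hve : v = g - 1
        · subst hve
          simp only [if_pos rfl]
          have : u + 1 + (g-1) = u + g := by omega
          rw [this, hCug]
          exact hp (u+g) (by omega)
        · simp only [if_neg hve]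
          exact hp (u+1+v) (by omega)
      · intro v hv
        have hve : v ≠ g - 1 := by omega
        simp only [if_neg hve]
        exact hq (u+1+v) (by omega)
      · simp only [if_pos rfl]
        exact hq u (by omega)

lemma exists_cycle {m n : ℕ} (p q : Fin m → Fin n → Prop)
    (hdis : ∀ r c, p r c → q r c → False)
    (h1 : ∀ r c, p r c → ∃ r', q r' c)
    (h2 : ∀ r c, q r c → ∃ c', p r c')
    (r0 : Fin m) (c0 : Fin n) (h0 : p r0 c0) :
    ∃ t', 2 ≤ t' ∧ ∃ R' : ℕ → Fin m, ∃ C' : ℕ → Fin n,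
      (∀ s s', s < t' → s' < t' → R' s = R' s' → s = s') ∧
      (∀ s s', s < t' → s' < t' → C' s = C' s' → s = s') ∧
      (∀ s, s < t' → p (R' s) (C' s)) ∧
      (∀ s, s + 1 < t' → q (R' (s+1)) (C' s)) ∧
      q (R' 0) (C' (t'-1)) := by
  classical
  have step : ∀ x : Fin m × Fin n, p x.1 x.2 → ∃ y : Fin m × Fin n, p y.1 y.2 ∧ q y.1 x.2 := by
    rintro ⟨r, c⟩ h
    obtain ⟨r', hr'⟩ := h1 r c h
    obtain ⟨c', hc'⟩ := h2 r' c hr'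
    exact ⟨(r', c'), hc', hr'⟩
  let T := {x : Fin m × Fin n // p x.1 x.2}
  let gstep : T → T := fun x => ⟨(step x.1 x.2).choose, (step x.1 x.2).choose_spec.1⟩
  have gq : ∀ x : T, q (gstep x).1.1 x.1.2 := fun x => (step x.1 x.2).choose_spec.2
  let f : ℕ → T := fun s => gstep^[s] ⟨(r0, c0), h0⟩
  set r : ℕ → Fin m := fun s => (f s).1.1 with hrdef
  set c : ℕ → Fin n := fun s => (f s).1.2 with hcdef
  have hfp : ∀ s, p (r s) (c s) := fun s => (f s).2
  have hfs : ∀ s, f (s+1) = gstep (f s) := fun s => Function.iterate_succ_apply' gstep s _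
  have hfq : ∀ s, q (r (s+1)) (c s) := fun s => by
    show q (f (s+1)).1.1 (f s).1.2
    rw [hfs]
    exact gq (f s)
  -- pigeonhole on rows
  have hm : Fintype.card (Fin m) < Fintype.card (Fin (m+1)) := by simp
  obtain ⟨x, y, hxy, hEq⟩ :=
    Fintype.exists_ne_map_eq_of_card_lt (fun s : Fin (m+1) => r s) hm
  have hex : ∃ b, ∃ a, a < b ∧ r a = r b := by
    rcases Nat.lt_or_ge (x : ℕ) (y : ℕ) with hlt | hge
    · exact ⟨y, x, hlt, hEq⟩
    · have : (y : ℕ) < (x : ℕ) := by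
        rcases Nat.lt_or_ge (y : ℕ) (x : ℕ) with h' | h'
        · exact h'
        · exact absurd (Fin.ext (by omega)) hxy
      exact ⟨x, y, this, hEq.symm⟩
  set b0 := Nat.find hex with hb0
  obtain ⟨a0, ha0, hr0⟩ := Nat.find_spec hex
  have hmin : ∀ b' , b' < b0 → ¬ ∃ a, a < b' ∧ r a = r b' := fun b' hb' => Nat.find_min hex hb'
  set t1 := b0 - a0 with ht1def
  have ht1 : 2 ≤ t1 := by
    rcases Nat.lt_or_ge 1 t1 with h | h
    · omega
    · exfalso
      have hb : b0 = a0 + 1 := by omega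
      apply hdis (r a0) (c a0) (hfp a0)
      have hq' := hfq a0
      rw [show a0 + 1 = Nat.find hex from by omega] at hq'
      rwa [← hr0] at hq'
  refine refine_cycle p q hdis t1 ht1 (fun s => r (a0 + s)) (fun s => c (a0 + s)) ?_ ?_ ?_ ?_
  · intro s s' hs hs' hEq'
    rcases Nat.lt_trichotomy s s' with h | h | h
    · exfalso
      exact hmin (a0 + s') (by omega) ⟨a0 + s, by omega, hEq'⟩
    · exact h
    · exfalso
      exact hmin (a0 + s) (by omega) ⟨a0 + s', by omega, hEq'.symm⟩
  · intro s hs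
    exact hfp (a0 + s)
  · intro s hs
    have : a0 + s + 1 = a0 + (s + 1) := by omega
    rw [show a0 + (s+1) = (a0 + s) + 1 from by omega] at *
    exact hfq (a0 + s)
  · show q (r (a0 + 0)) (c (a0 + (t1 - 1)))
    rw [Nat.add_zero, show a0 + (t1 - 1) = b0 - 1 from by omega]
    have hq' := hfq (b0 - 1)
    rw [show b0 - 1 + 1 = Nat.find hex from by omega] at hq'
    rwa [← hr0] at hq'


lemma cb_swap_rows {m n : ℕ} {M : Fin m → Fin n → Bool} {a b : Fin m} {c d : Fin n}
    (h : IsCheckerboardUnit M a b c d) : IsCheckerboardUnit M b a c d := by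
  unfold IsCheckerboardUnit at *; tauto

lemma cb_swap_cols {m n : ℕ} {M : Fin m → Fin n → Bool} {a b : Fin m} {c d : Fin n}
    (h : IsCheckerboardUnit M a b c d) : IsCheckerboardUnit M a b d c := by
  unfold IsCheckerboardUnit at *; tauto

lemma three_cols {n : ℕ} {k l c1 c2 c3 : Fin n}
    (h1 : c1 = k ∨ c1 = l) (h2 : c2 = k ∨ c2 = l) (h3 : c3 = k ∨ c3 = l)
    (d12 : c1 ≠ c2) (d13 : c1 ≠ c3) (d23 : c2 ≠ c3) : False := by
  rcases h1 with rfl | rfl <;> rcases h2 with rfl | rfl <;> rcases h3 with rfl | rfl <;> simp_all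

lemma extract_cb {m n : ℕ} (M : Fin m → Fin n → Bool) :
    ∀ t, 2 ≤ t → ∀ R : ℕ → Fin m, ∀ C : ℕ → Fin n,
    (∀ s s', s < t → s' < t → R s = R s' → s = s') →
    (∀ s s', s < t → s' < t → C s = C s' → s = s') →
    (∀ s, s < t → M (R s) (C s) = false) →
    (∀ s, s + 1 < t → M (R (s+1)) (C s) = true) →
    M (R 0) (C (t-1)) = true →
    ∃ a b c d, (∃ s, s < t ∧ R s = a) ∧ (∃ s, s < t ∧ R s = b) ∧
      (∃ s, s < t ∧ C s = c) ∧ (∃ s, s < t ∧ C s = d) ∧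
      a ≠ b ∧ c ≠ d ∧ IsCheckerboardUnit M a b c d := by
  intro t
  induction t using Nat.strong_induction_on with
  | _ t IH =>
    intro ht R C hR hC hp hq hcl
    rcases eq_or_lt_of_le ht with h2 | h3
    · -- t = 2
      have hcl' : M (R 0) (C 1) = true := by
        have : t - 1 = 1 := by omega
        rwa [this] at hcl
      refine ⟨R 0, R 1, C 0, C 1, ⟨0, by omega, rfl⟩, ⟨1, by omega, rfl⟩,
        ⟨0, by omega, rfl⟩, ⟨1, by omega, rfl⟩, ?_, ?_, ?_⟩
      · intro h; exact absurd (hR 0 1 (by omega) (by omega) h) (by omega)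
      · intro h; exact absurd (hC 0 1 (by omega) (by omega) h) (by omega)
      · exact Or.inr ⟨hp 0 (by omega), hcl', hq 0 (by omega), hp 1 (by omega)⟩
    · -- 3 ≤ t
      cases hch : M (R 0) (C 1) with
      | true =>
        refine ⟨R 0, R 1, C 0, C 1, ⟨0, by omega, rfl⟩, ⟨1, by omega, rfl⟩,
          ⟨0, by omega, rfl⟩, ⟨1, by omega, rfl⟩, ?_, ?_, ?_⟩
        · intro h; exact absurd (hR 0 1 (by omega) (by omega) h) (by omega)
        · intro h; exact absurd (hC 0 1 (by omega) (by omega) h) (by omega)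
        · exact Or.inr ⟨hp 0 (by omega), hch, hq 0 (by omega), hp 1 (by omega)⟩
      | false =>
        obtain ⟨a, b, c, d, ⟨sa, hsa, ha⟩, ⟨sb, hsb, hb⟩, ⟨sc, hsc, hc⟩, ⟨sd, hsd, hd⟩,
            hab, hcd, hcb⟩ :=
          IH (t-1) (by omega) (by omega)
            (fun u => if u = 0 then R 0 else R (u+1)) (fun u => C (u+1))
            (by
              intro s s' hs hs' hEq
              by_cases h0 : s = 0 <;> by_cases h0' : s' = 0
              · omega
              · subst h0; simp only [if_pos rfl, if_neg h0'] at hEq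
                have := hR 0 (s'+1) (by omega) (by omega) hEq; omega
              · subst h0'; simp only [if_pos rfl, if_neg h0] at hEq
                have := hR (s+1) 0 (by omega) (by omega) hEq; omega
              · simp only [if_neg h0, if_neg h0'] at hEq
                have := hR (s+1) (s'+1) (by omega) (by omega) hEq; omega)
            (by
              intro s s' hs hs' hEq
              have := hC (s+1) (s'+1) (by omega) (by omega) hEq; omega)
            (by
              intro s hs
              by_cases h0 : s = 0
              · subst h0; simpa using hch
              · simp only [if_neg h0]; exact hp (s+1) (by omega))
            (by
              intro s hs
              have h0 : s + 1 ≠ 0 := by omega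
              simp only [if_neg h0]
              exact hq (s+1) (by omega))
            (by
              simp only [if_pos rfl]
              have : t - 1 - 1 + 1 = t - 1 := by omega
              rwa [this])
        refine ⟨a, b, c, d, ?_, ?_, ⟨sc + 1, by omega, hc⟩, ⟨sd + 1, by omega, hd⟩,
          hab, hcd, hcb⟩
        · by_cases h0 : sa = 0
          · subst h0; simp only [if_pos rfl] at ha; exact ⟨0, by omega, ha⟩
          · simp only [if_neg h0] at ha; exact ⟨sa + 1, by omega, ha⟩
        · by_cases h0 : sb = 0
          · subst h0; simp only [if_pos rfl] at hb; exact ⟨0, by omega, hb⟩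
          · simp only [if_neg h0] at hb; exact ⟨sb + 1, by omega, hb⟩

lemma no_long_cycle {m n : ℕ} (M : Fin m → Fin n → Bool) (k l : Fin n)
    (HU : ∀ a b c d, IsCheckerboardUnit M a b c d → a ≠ b → c ≠ d →
      (c = k ∨ c = l) ∧ (d = k ∨ d = l)) :
    ∀ t, 3 ≤ t → ∀ R : ℕ → Fin m, ∀ C : ℕ → Fin n,
    (∀ s s', s < t → s' < t → R s = R s' → s = s') →
    (∀ s s', s < t → s' < t → C s = C s' → s = s') →
    (∀ s, s < t → M (R s) (C s) = false) →
    (∀ s, s + 1 < t → M (R (s+1)) (C s) = true) →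
    M (R 0) (C (t-1)) = true → False := by
  intro t
  induction t using Nat.strong_induction_on with
  | _ t IH =>
    intro ht R C hR hC hp hq hcl
    have hRne : ∀ s s', s < t → s' < t → s ≠ s' → R s ≠ R s' := by
      intro s s' hs hs' hne hEq; exact hne (hR s s' hs hs' hEq)
    have hCne : ∀ s s', s < t → s' < t → s ≠ s' → C s ≠ C s' := by
      intro s s' hs hs' hne hEq; exact hne (hC s s' hs hs' hEq)
    cases hch1 : M (R 0) (C 1) with
    | true =>
      have hA : IsCheckerboardUnit M (R 0) (R 1) (C 0) (C 1) :=
        Or.inr ⟨hp 0 (by omega), hch1, hq 0 (by omega), hp 1 (by omega)⟩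
      have hAm := HU _ _ _ _ hA (hRne 0 1 (by omega) (by omega) (by omega))
        (hCne 0 1 (by omega) (by omega) (by omega))
      cases hch2 : M (R 1) (C 2) with
      | true =>
        have hB : IsCheckerboardUnit M (R 1) (R 2) (C 1) (C 2) :=
          Or.inr ⟨hp 1 (by omega), hch2, hq 1 (by omega), hp 2 (by omega)⟩
        have hBm := HU _ _ _ _ hB (hRne 1 2 (by omega) (by omega) (by omega))
          (hCne 1 2 (by omega) (by omega) (by omega))
        exact three_cols hAm.1 hAm.2 hBm.2
          (hCne 0 1 (by omega) (by omega) (by omega))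
          (hCne 0 2 (by omega) (by omega) (by omega))
          (hCne 1 2 (by omega) (by omega) (by omega))
      | false =>
        -- drop row index 2 and column index 1
        obtain ⟨a, b, c, d, _, _, ⟨sc, hsc, hc⟩, ⟨sd, hsd, hd⟩, hab, hcd, hcb⟩ :=
          extract_cb M (t-1) (by omega)
            (fun u => if u ≤ 1 then R u else R (u+1))
            (fun u => if u = 0 then C 0 else C (u+1))
            (by
              intro s s' hs hs' hEq
              by_cases h0 : s ≤ 1 <;> by_cases h0' : s' ≤ 1
              · rw [if_pos h0, if_pos h0'] at hEq
                exact hR s s' (by omega) (by omega) hEq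
              · rw [if_pos h0, if_neg h0'] at hEq
                have := hR s (s'+1) (by omega) (by omega) hEq; omega
              · rw [if_neg h0, if_pos h0'] at hEq
                have := hR (s+1) s' (by omega) (by omega) hEq; omega
              · rw [if_neg h0, if_neg h0'] at hEq
                have := hR (s+1) (s'+1) (by omega) (by omega) hEq; omega)
            (by
              intro s s' hs hs' hEq
              by_cases h0 : s = 0 <;> by_cases h0' : s' = 0
              · omega
              · rw [if_pos h0, if_neg h0'] at hEq
                have := hC 0 (s'+1) (by omega) (by omega) hEq; omega
              · rw [if_neg h0, if_pos h0'] at hEq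
                have := hC (s+1) 0 (by omega) (by omega) hEq; omega
              · rw [if_neg h0, if_neg h0'] at hEq
                have := hC (s+1) (s'+1) (by omega) (by omega) hEq; omega)
            (by
              intro s hs
              by_cases h0 : s = 0
              · subst h0; simpa using hp 0 (by omega)
              · by_cases h1 : s = 1
                · subst h1; simpa using hch2
                · rw [if_neg (by omega : ¬ s ≤ 1), if_neg h0]
                  exact hp (s+1) (by omega))
            (by
              intro s hs
              by_cases h0 : s = 0
              · subst h0; simpa using hq 0 (by omega)
              · rw [if_neg (by omega : ¬ s + 1 ≤ 1), if_neg h0]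
                exact hq (s+1) (by omega))
            (by
              rw [if_pos (by omega : (0:ℕ) ≤ 1), if_neg (by omega : t - 1 - 1 ≠ 0),
                show t - 1 - 1 + 1 = t - 1 from by omega]
              exact hcl)
        have hBm := HU _ _ _ _ hcb hab hcd
        have hcne : C 1 ≠ c := by
          subst hc
          by_cases h0 : sc = 0
          · subst h0; simpa using hCne 1 0 (by omega) (by omega) (by omega)
          · rw [if_neg h0]; exact hCne 1 (sc+1) (by omega) (by omega) (by omega)
        have hdne : C 1 ≠ d := by
          subst hd
          by_cases h0 : sd = 0
          · subst h0; simpa using hCne 1 0 (by omega) (by omega) (by omega)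
          · rw [if_neg h0]; exact hCne 1 (sd+1) (by omega) (by omega) (by omega)
        exact three_cols hAm.2 hBm.1 hBm.2 hcne hdne hcd
    | false =>
      rcases Nat.lt_or_ge t 4 with ht3 | ht4
      · -- t = 3
        have ht3' : t = 3 := by omega
        subst ht3'
        have hcl' : M (R 0) (C 2) = true := hcl
        have hA : IsCheckerboardUnit M (R 0) (R 2) (C 1) (C 2) :=
          Or.inr ⟨hch1, hcl', hq 1 (by omega), hp 2 (by omega)⟩
        have hAm := HU _ _ _ _ hA (hRne 0 2 (by omega) (by omega) (by omega))
          (hCne 1 2 (by omega) (by omega) (by omega))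
        cases hch3 : M (R 2) (C 0) with
        | true =>
          have hB : IsCheckerboardUnit M (R 0) (R 2) (C 0) (C 2) :=
            Or.inr ⟨hp 0 (by omega), hcl', hch3, hp 2 (by omega)⟩
          have hBm := HU _ _ _ _ hB (hRne 0 2 (by omega) (by omega) (by omega))
            (hCne 0 2 (by omega) (by omega) (by omega))
          exact three_cols hBm.1 hAm.1 hAm.2
            (hCne 0 1 (by omega) (by omega) (by omega))
            (hCne 0 2 (by omega) (by omega) (by omega))
            (hCne 1 2 (by omega) (by omega) (by omega))
        | false =>
          have hB : IsCheckerboardUnit M (R 1) (R 2) (C 0) (C 1) :=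
            Or.inl ⟨hq 0 (by omega), hp 1 (by omega), hch3, hq 1 (by omega)⟩
          have hBm := HU _ _ _ _ hB (hRne 1 2 (by omega) (by omega) (by omega))
            (hCne 0 1 (by omega) (by omega) (by omega))
          exact three_cols hBm.1 hAm.1 hAm.2
            (hCne 0 1 (by omega) (by omega) (by omega))
            (hCne 0 2 (by omega) (by omega) (by omega))
            (hCne 1 2 (by omega) (by omega) (by omega))
      · -- t ≥ 4 : shorten at 1 and recurse
        apply IH (t-1) (by omega) (by omega)
          (fun u => if u = 0 then R 0 else R (u+1)) (fun u => C (u+1))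
        · intro s s' hs hs' hEq
          by_cases h0 : s = 0 <;> by_cases h0' : s' = 0
          · omega
          · rw [if_pos h0, if_neg h0'] at hEq
            have := hR 0 (s'+1) (by omega) (by omega) hEq; omega
          · rw [if_neg h0, if_pos h0'] at hEq
            have := hR (s+1) 0 (by omega) (by omega) hEq; omega
          · rw [if_neg h0, if_neg h0'] at hEq
            have := hR (s+1) (s'+1) (by omega) (by omega) hEq; omega
        · intro s s' hs hs' hEq
          have := hC (s+1) (s'+1) (by omega) (by omega) hEq; omega
        · intro s hs
          by_cases h0 : s = 0
          · subst h0; simpa using hch1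
          · rw [if_neg h0]; exact hp (s+1) (by omega)
        · intro s hs
          rw [if_neg (by omega : s + 1 ≠ 0)]
          exact hq (s+1) (by omega)
        · rw [if_pos rfl]
          have : t - 1 - 1 + 1 = t - 1 := by omega
          rw [this]
          exact hcl
lemma key_block {m n : ℕ} (M : Fin m → Fin n → Bool) (i j : Fin m) (k l : Fin n)
    (HU4 : ∀ a b c d, IsCheckerboardUnit M a b c d → a ≠ b → c ≠ d →
      (a = i ∨ a = j) ∧ (b = i ∨ b = j) ∧ (c = k ∨ c = l) ∧ (d = k ∨ d = l))
    (N : Fin m → Fin n → Bool) (hNM : N ≠ M)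
    (hrow : ∀ r, rowSum N r = rowSum M r) (hcol : ∀ c, colSum N c = colSum M c) :
    ∀ r c, (r = i ∨ r = j) → (c = k ∨ c = l) → N r c ≠ M r c := by
  classical
  set p : Fin m → Fin n → Prop := fun r c => N r c = true ∧ M r c = false with hp_def
  set q : Fin m → Fin n → Prop := fun r c => N r c = false ∧ M r c = true with hq_def
  have hdis : ∀ r c, p r c → q r c → False := by
    intro r c h1 h2
    obtain ⟨ha, -⟩ := h1
    obtain ⟨hb, -⟩ := h2
    rw [ha] at hb
    exact Bool.noConfusion hb
  have h1 : ∀ r c, p r c → ∃ r', q r' c := by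
    intro r c hp
    obtain ⟨y, hy⟩ := exists_diff (fun r' => M r' c) (fun r' => N r' c)
      ((hcol c).symm) r ⟨hp.1, hp.2⟩
    exact ⟨y, hy.2, hy.1⟩
  have h2 : ∀ r c, q r c → ∃ c', p r c' := by
    intro r c hq
    obtain ⟨y, hy⟩ := exists_diff (fun c' => N r c') (fun c' => M r c')
      (hrow r) c ⟨hq.2, hq.1⟩
    exact ⟨y, hy.1, hy.2⟩
  have hstart : ∃ r c, p r c := by
    have hex : ∃ r c, N r c ≠ M r c := by
      by_contra hcon
      push_neg at hcon
      exact hNM (funext fun r => funext fun c => hcon r c)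
    obtain ⟨r, c, hrc⟩ := hex
    cases hN : N r c <;> cases hM : M r c
    · rw [hN, hM] at hrc; exact absurd rfl hrc
    · obtain ⟨c', hc'⟩ := h2 r c ⟨hN, hM⟩
      exact ⟨r, c', hc'⟩
    · exact ⟨r, c, hN, hM⟩
    · rw [hN, hM] at hrc; exact absurd rfl hrc
  obtain ⟨r0, c0, h0⟩ := hstart
  obtain ⟨t, ht, R, C, hR, hC, hcp, hcq, hccl⟩ := exists_cycle p q hdis h1 h2 r0 c0 h0
  rcases Nat.lt_or_ge t 3 with ht2 | ht3
  swap
  · exact absurd (no_long_cycle M k l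
      (fun a b c d h ha hc => (HU4 a b c d h ha hc).2.2) t ht3 R C hR hC
      (fun s hs => (hcp s hs).2) (fun s hs => (hcq s hs).2) hccl.2) (fun h => h)
  · have ht2' : t = 2 := by omega
    subst ht2'
    have hR01 : R 0 ≠ R 1 := fun h => by
      have := hR 0 1 (by omega) (by omega) h; omega
    have hC01 : C 0 ≠ C 1 := fun h => by
      have := hC 0 1 (by omega) (by omega) h; omega
    have hp0 := hcp 0 (by omega)
    have hp1 := hcp 1 (by omega)
    have hq0 := hcq 0 (by omega)
    have hq1 : q (R 0) (C 1) := hccl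
    have hcb2 : IsCheckerboardUnit M (R 0) (R 1) (C 0) (C 1) :=
      Or.inr ⟨hp0.2, hq1.2, hq0.2, hp1.2⟩
    obtain ⟨hm1, hm2, hm3, hm4⟩ := HU4 _ _ _ _ hcb2 hR01 hC01
    have hrows : ∀ x : Fin m, (x = i ∨ x = j) → x = R 0 ∨ x = R 1 := by
      intro x hx
      rcases hm1 with e1 | e1 <;> rcases hm2 with e2 | e2 <;> rcases hx with rfl | rfl
      · exact Or.inl e1.symm
      · exact absurd (e1.trans e2.symm) hR01
      · exact Or.inl e1.symm
      · exact Or.inr e2.symm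
      · exact Or.inr e2.symm
      · exact Or.inl e1.symm
      · exact absurd (e1.trans e2.symm) hR01
      · exact Or.inl e1.symm
    have hcols : ∀ x : Fin n, (x = k ∨ x = l) → x = C 0 ∨ x = C 1 := by
      intro x hx
      rcases hm3 with e1 | e1 <;> rcases hm4 with e2 | e2 <;> rcases hx with rfl | rfl
      · exact Or.inl e1.symm
      · exact absurd (e1.trans e2.symm) hC01
      · exact Or.inl e1.symm
      · exact Or.inr e2.symm
      · exact Or.inr e2.symm
      · exact Or.inl e1.symm
      · exact absurd (e1.trans e2.symm) hC01
      · exact Or.inl e1.symm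
    intro r c hr hc
    have d00 : N (R 0) (C 0) ≠ M (R 0) (C 0) := by rw [hp0.1, hp0.2]; simp
    have d10 : N (R 1) (C 0) ≠ M (R 1) (C 0) := by rw [hq0.1, hq0.2]; simp
    have d11 : N (R 1) (C 1) ≠ M (R 1) (C 1) := by rw [hp1.1, hp1.2]; simp
    have d01 : N (R 0) (C 1) ≠ M (R 0) (C 1) := by rw [hq1.1, hq1.2]; simp
    rcases hrows r hr with rfl | rfl <;> rcases hcols c hc with rfl | rfl <;>
      assumption


/-- If `M` contains exactly one checkerboard unit (a unique unordered pair of rows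
together with a unique unordered pair of columns forming a checkerboard unit, unordered
pairs being represented by `i < j` and `k < l`), then `M` admits exactly one alternative
configuration: there is exactly one matrix `N ≠ M` with the same row sums and column
sums as `M`, namely the matrix obtained from `M` by swapping that checkerboard unit. -/
theorem unique_checkerboard_unique_alternative {m n : ℕ} (M : Fin m → Fin n → Bool)
    (i j : Fin m) (k l : Fin n) (hij : i < j) (hkl : k < l)
    (hcb : IsCheckerboardUnit M i j k l)
    (huniq : ∀ (i' j' : Fin m) (k' l' : Fin n), i' < j' → k' < l' →
        IsCheckerboardUnit M i' j' k' l' → i' = i ∧ j' = j ∧ k' = k ∧ l' = l) :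
    (swapCheckerboard M i j k l ≠ M ∧
      (∀ r, rowSum (swapCheckerboard M i j k l) r = rowSum M r) ∧
      (∀ c, colSum (swapCheckerboard M i j k l) c = colSum M c)) ∧
    ∀ N : Fin m → Fin n → Bool, N ≠ M →
      (∀ r, rowSum N r = rowSum M r) → (∀ c, colSum N c = colSum M c) →
        N = swapCheckerboard M i j k l := by
  classical
  have HU4 : ∀ a b c d, IsCheckerboardUnit M a b c d → a ≠ b → c ≠ d →
      (a = i ∨ a = j) ∧ (b = i ∨ b = j) ∧ (c = k ∨ c = l) ∧ (d = k ∨ d = l) := by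
    intro a b c d hcb' hab hcd
    rcases Ne.lt_or_gt hab with h1 | h1 <;> rcases Ne.lt_or_gt hcd with h2 | h2
    · obtain ⟨e1, e2, e3, e4⟩ := huniq a b c d h1 h2 hcb'
      exact ⟨Or.inl e1, Or.inr e2, Or.inl e3, Or.inr e4⟩
    · obtain ⟨e1, e2, e3, e4⟩ := huniq a b d c h1 h2 (cb_swap_cols hcb')
      exact ⟨Or.inl e1, Or.inr e2, Or.inr e4, Or.inl e3⟩
    · obtain ⟨e1, e2, e3, e4⟩ := huniq b a c d h1 h2 (cb_swap_rows hcb')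
      exact ⟨Or.inr e2, Or.inl e1, Or.inl e3, Or.inr e4⟩
    · obtain ⟨e1, e2, e3, e4⟩ := huniq b a d c h1 h2 (cb_swap_rows (cb_swap_cols hcb'))
      exact ⟨Or.inr e2, Or.inl e1, Or.inr e4, Or.inl e3⟩
  have hMkl : ∀ r : Fin m, (r = i ∨ r = j) → M r k ≠ M r l := by
    intro r hr
    rcases hr with rfl | rfl <;>
      rcases hcb with ⟨h1, h2, h3, h4⟩ | ⟨h1, h2, h3, h4⟩ <;> simp [h1, h2, h3, h4]
  have hMij : ∀ c : Fin n, (c = k ∨ c = l) → M i c ≠ M j c := by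
    intro c hc
    rcases hc with rfl | rfl <;>
      rcases hcb with ⟨h1, h2, h3, h4⟩ | ⟨h1, h2, h3, h4⟩ <;> simp [h1, h2, h3, h4]
  refine ⟨⟨?_, ?_, ?_⟩, ?_⟩
  · -- swap ≠ M
    intro h
    have h2 := congrFun (congrFun h i) k
    simp [swapCheckerboard] at h2
  · -- row sums of swap
    intro r
    by_cases hr : r = i ∨ r = j
    · show (Finset.univ.filter fun c => swapCheckerboard M i j k l r c = true).card
        = (Finset.univ.filter fun c => M r c = true).card
      apply card_filter_flip2 (fun c => M r c) _ k l hkl.ne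
      · simp [swapCheckerboard, hr]
      · simp [swapCheckerboard, hr]
      · exact hMkl r hr
      · intro c hck hcl'
        simp [swapCheckerboard, hck, hcl']
    · unfold rowSum
      congr 1
      ext c
      simp [swapCheckerboard, hr]
  · -- col sums of swap
    intro c
    by_cases hc : c = k ∨ c = l
    · show (Finset.univ.filter fun r => swapCheckerboard M i j k l r c = true).card
        = (Finset.univ.filter fun r => M r c = true).card
      apply card_filter_flip2 (fun r => M r c) _ i j hij.ne
      · simp [swapCheckerboard, hc]
      · simp [swapCheckerboard, hc]
      · exact hMij c hc
      · intro r hri hrj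
        simp [swapCheckerboard, hri, hrj]
    · unfold colSum
      congr 1
      ext r
      simp [swapCheckerboard, hc]
  · -- uniqueness
    intro N hNM hrow hcol
    have hblock := key_block M i j k l HU4 N hNM hrow hcol
    have hNnot : ∀ r c, (r = i ∨ r = j) → (c = k ∨ c = l) → N r c = !(M r c) := by
      intro r c hr hc
      have := hblock r c hr hc
      revert this
      cases N r c <;> cases M r c <;> simp
    set N' : Fin m → Fin n → Bool :=
      fun r c => if (r = i ∨ r = j) ∧ (c = k ∨ c = l) then M r c else N r c with hN'def
    have hN'in : ∀ r c, (r = i ∨ r = j) → (c = k ∨ c = l) → N' r c = M r c := by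
      intro r c hr hc
      simp only [hN'def]
      rw [if_pos ⟨hr, hc⟩]
    have hN'out : ∀ r c, ¬((r = i ∨ r = j) ∧ (c = k ∨ c = l)) → N' r c = N r c := by
      intro r c hcond
      simp only [hN'def]
      rw [if_neg hcond]
    have hNkl : ∀ r : Fin m, (r = i ∨ r = j) → N r k ≠ N r l := by
      intro r hr
      rw [hNnot r k hr (Or.inl rfl), hNnot r l hr (Or.inr rfl)]
      have := hMkl r hr
      revert this
      cases M r k <;> cases M r l <;> simp
    have hNij : ∀ c : Fin n, (c = k ∨ c = l) → N i c ≠ N j c := by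
      intro c hc
      rw [hNnot i c (Or.inl rfl) hc, hNnot j c (Or.inr rfl) hc]
      have := hMij c hc
      revert this
      cases M i c <;> cases M j c <;> simp
    have hrow' : ∀ r, rowSum N' r = rowSum M r := by
      intro r
      rw [← hrow r]
      by_cases hr : r = i ∨ r = j
      · show (Finset.univ.filter fun c => N' r c = true).card
          = (Finset.univ.filter fun c => N r c = true).card
        apply card_filter_flip2 (fun c => N r c) _ k l hkl.ne
        · rw [hN'in r k hr (Or.inl rfl)]
          exact (hblock r k hr (Or.inl rfl)).symm
        · rw [hN'in r l hr (Or.inr rfl)]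
          exact (hblock r l hr (Or.inr rfl)).symm
        · exact hNkl r hr
        · intro c hck hcl'
          exact hN'out r c (fun h => by rcases h.2 with h' | h'; exacts [hck h', hcl' h'])
      · unfold rowSum
        congr 1
        ext c
        simp only [Finset.mem_filter, Finset.mem_univ, true_and]
        rw [hN'out r c (fun h => hr h.1)]
    have hcol' : ∀ c, colSum N' c = colSum M c := by
      intro c
      rw [← hcol c]
      by_cases hc : c = k ∨ c = l
      · show (Finset.univ.filter fun r => N' r c = true).card
          = (Finset.univ.filter fun r => N r c = true).card
        apply card_filter_flip2 (fun r => N r c) _ i j hij.ne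
        · rw [hN'in i c (Or.inl rfl) hc]
          exact (hblock i c (Or.inl rfl) hc).symm
        · rw [hN'in j c (Or.inr rfl) hc]
          exact (hblock j c (Or.inr rfl) hc).symm
        · exact hNij c hc
        · intro r hri hrj
          exact hN'out r c (fun h => by rcases h.1 with h' | h'; exacts [hri h', hrj h'])
      · unfold colSum
        congr 1
        ext r
        simp only [Finset.mem_filter, Finset.mem_univ, true_and]
        rw [hN'out r c (fun h => hc h.2)]
    by_cases hN'M : N' = M
    · funext r c
      by_cases hcond : (r = i ∨ r = j) ∧ (c = k ∨ c = l)
      · rw [hNnot r c hcond.1 hcond.2]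
        show _ = swapCheckerboard M i j k l r c
        unfold swapCheckerboard
        rw [if_pos hcond]
      · have he : N' r c = M r c := congrFun (congrFun hN'M r) c
        rw [hN'out r c hcond] at he
        rw [he]
        show _ = swapCheckerboard M i j k l r c
        unfold swapCheckerboard
        rw [if_neg hcond]
    · exfalso
      have hb' := key_block M i j k l HU4 N' hN'M hrow' hcol' i k (Or.inl rfl) (Or.inl rfl)
      exact hb' (hN'in i k (Or.inl rfl) (Or.inl rfl))
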